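/- Let ⋆ be a semistar operation on an integral domain D and let P be a prime ideal of D. Define ⋆_P on D_P by E^{⋆_P} := E^⋆ for each nonzero D_P-submodule E of the quotient field K. If ⋆ is an a.b. semistar operation on D, then ⋆_P is an a.b. semistar operation on D_P. -/

import Mathlib

open Pointwise

section Preamble

variable (D : Type*) [CommRing D] [IsDomain D]
variable (K : Type*) [Field K] [Algebra D K] [IsFractionRing D K]

/-- The localization `D_P` of `D` at a prime `P`, as a subalgebra of the quotient field. -/
noncomputable def locAt (P : Ideal D) (hP : P.IsPrime) : Subalgebra D K :=
  Localization.subalgebra K P.primeCompl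
    (fun x hx => mem_nonZeroDivisors_of_ne_zero (fun h0 : x = 0 => hx (h0 ▸ P.zero_mem)))

/-- `D_P` as a `D`-submodule of the quotient field. -/
noncomputable def locAtM (P : Ideal D) (hP : P.IsPrime) : Submodule D K :=
  Subalgebra.toSubmodule (locAt D K P hP)

variable {D K}

/-- `E` is finitely generated as a module over the subring corresponding to `Rm`. -/
def IsRFG (Rm E : Submodule D K) : Prop :=
  ∃ F₀ : Submodule D K, F₀.FG ∧ F₀ ≠ ⊥ ∧ E = F₀ * Rm

/-- `s` is a semistar operation on the subring corresponding to `Rm`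
(on `D` itself when `Rm = 1`): it is defined on the nonzero `Rm`-submodules of `K`. -/
def IsSemistar (Rm : Submodule D K) (s : Submodule D K → Submodule D K) : Prop :=
  (∀ E, E ≠ ⊥ → Rm * E ≤ E → Rm * s E ≤ s E) ∧
  (∀ (x : K) (E), x ≠ 0 → E ≠ ⊥ → Rm * E ≤ E → s (x • E) = x • s E) ∧
  (∀ E F, E ≠ ⊥ → F ≠ ⊥ → Rm * E ≤ E → Rm * F ≤ F → E ≤ F → s E ≤ s F) ∧
  (∀ E, E ≠ ⊥ → Rm * E ≤ E → E ≤ s E) ∧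
  (∀ E, E ≠ ⊥ → Rm * E ≤ E → s (s E) = s E)

/-- `s` is of finite type. -/
def IsFiniteType (Rm : Submodule D K) (s : Submodule D K → Submodule D K) : Prop :=
  ∀ E, E ≠ ⊥ → Rm * E ≤ E → s E = sSup {G | ∃ F, IsRFG Rm F ∧ F ≤ E ∧ G = s F}

/-- `s` is a.b. -/
def IsAB (Rm : Submodule D K) (s : Submodule D K → Submodule D K) : Prop :=
  ∀ F G H : Submodule D K, IsRFG Rm F → G ≠ ⊥ → Rm * G ≤ G → H ≠ ⊥ → Rm * H ≤ H →
    s (F * G) ≤ s (F * H) → s G ≤ s H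

/-- `s` is e.a.b. -/
def IsEAB (Rm : Submodule D K) (s : Submodule D K → Submodule D K) : Prop :=
  ∀ F G H : Submodule D K, IsRFG Rm F → IsRFG Rm G → IsRFG Rm H →
    s (F * G) ≤ s (F * H) → s G ≤ s H

/-- `s` is stable. -/
def IsStable (Rm : Submodule D K) (s : Submodule D K → Submodule D K) : Prop :=
  ∀ E F, E ≠ ⊥ → F ≠ ⊥ → Rm * E ≤ E → Rm * F ≤ F → s (E ⊓ F) = s E ⊓ s F

/-- The divisorial closure `E ↦ (R : (R : E))` over the subring corresponding to `Rm`. -/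
def vOp (Rm E : Submodule D K) : Submodule D K := Rm / (Rm / E)

/-- The `t`-operation over the subring corresponding to `Rm`. -/
def tOp (Rm E : Submodule D K) : Submodule D K :=
  sSup {G | ∃ F, IsRFG Rm F ∧ F ≤ E ∧ G = vOp Rm F}

end Preamble

variable {D : Type*} [CommRing D] [IsDomain D]
variable {K : Type*} [Field K] [Algebra D K] [IsFractionRing D K]

/-- if `⋆` is a.b. on `D`, then the induced operation `⋆_P` (the same map,
restricted to nonzero `D_P`-submodules of `K`) is a.b. on `D_P`. -/
theorem stmt2 (P : Ideal D) (hP : P.IsPrime) (s : Submodule D K → Submodule D K)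
    (hs : IsSemistar (1 : Submodule D K) s) (hab : IsAB (1 : Submodule D K) s) :
    IsAB (locAtM D K P hP) s := by
  intro F G H hF hG hGr hH hHr hle
  obtain ⟨F₀, hfg, hne, rfl⟩ := hF
  have h1 : (1 : Submodule D K) ≤ locAtM D K P hP := by
    rw [Submodule.one_le]
    exact (locAt D K P hP).one_mem
  have hGeq : locAtM D K P hP * G = G := by
    refine le_antisymm hGr ?_
    calc G = 1 * G := (one_mul G).symm
    _ ≤ locAtM D K P hP * G := mul_le_mul_left h1 G
  have hHeq : locAtM D K P hP * H = H := by
    refine le_antisymm hHr ?_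
    calc H = 1 * H := (one_mul H).symm
    _ ≤ locAtM D K P hP * H := mul_le_mul_left h1 H
  have key : s (F₀ * G) ≤ s (F₀ * H) := by
    have eG : F₀ * locAtM D K P hP * G = F₀ * G := by
      rw [mul_assoc, hGeq]
    have eH : F₀ * locAtM D K P hP * H = F₀ * H := by
      rw [mul_assoc, hHeq]
    rwa [eG, eH] at hle
  exact hab F₀ G H ⟨F₀, hfg, hne, (mul_one F₀).symm⟩ hG (by rw [one_mul]) hH
    (by rw [one_mul]) key
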